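/- With ι : H → K^{op} ⊗ H, h ↦ Σ σ_r(S^{-1}(h₂)) ⊗ h₁ and π : K^{op} ⊗ H → K^{op}, k ⊗ h ↦ k σ_r(h), the image of ι equals the space of coinvariants { x ∈ K^{op} ⊗ H : Σ x₁ ⊗ π(x₂) = x ⊗ 1_{K^{op}} } of the right K^{op}-comodule structure (id ⊗ π)∘Δ on K^{op} ⊗ H. -/

import Mathlib

open TensorProduct LinearMap Coalgebra Module

set_option synthInstance.maxHeartbeats 1000000
set_option maxHeartbeats 3000000

noncomputable section

section ConvStuff
variable {k : Type} [CommRing k] {C A : Type} [AddCommGroup C] [Module k C] [Coalgebra k C]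
  [Ring A] [Algebra k A] {ι : Type*}

/-- convolution product on `Hom(C, A)` -/
def conv (f g : C →ₗ[k] A) : C →ₗ[k] A :=
  LinearMap.mul' k A ∘ₗ TensorProduct.map f g ∘ₗ Coalgebra.comul

/-- unit of the convolution algebra -/
def cunit : C →ₗ[k] A := Algebra.linearMap k A ∘ₗ Coalgebra.counit

lemma conv_repr (f g : C →ₗ[k] A) (a : C) (r : Coalgebra.Repr k a ι) :
    conv f g a = ∑ i ∈ r.index, f (r.left i) * g (r.right i) := by
  simp [conv, ← r.eq, map_sum]

lemma sum_counit_smul (a : C) (r : Coalgebra.Repr k a ι) :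
    ∑ i ∈ r.index, Coalgebra.counit (R := k) (r.left i) • r.right i = a := by
  have h := Coalgebra.sum_counit_tmul_eq r
  apply_fun (TensorProduct.lid k C) at h
  simpa [map_sum, -Coalgebra.sum_counit_tmul_eq] using h

lemma sum_smul_counit (a : C) (r : Coalgebra.Repr k a ι) :
    ∑ i ∈ r.index, Coalgebra.counit (R := k) (r.right i) • r.left i = a := by
  have h := Coalgebra.sum_tmul_counit_eq r
  apply_fun (TensorProduct.rid k C) at h
  simpa [map_sum, -Coalgebra.sum_tmul_counit_eq] using h

lemma sum_counit_smul_map {B : Type} [AddCommGroup B] [Module k B] (f : C →ₗ[k] B)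
    (a : C) (r : Coalgebra.Repr k a ι) :
    ∑ i ∈ r.index, Coalgebra.counit (R := k) (r.left i) • f (r.right i) = f a := by
  have h := congrArg f (sum_counit_smul a r)
  rw [map_sum] at h
  simpa [map_smul] using h

lemma sum_smul_counit_map {B : Type} [AddCommGroup B] [Module k B] (f : C →ₗ[k] B)
    (a : C) (r : Coalgebra.Repr k a ι) :
    ∑ i ∈ r.index, Coalgebra.counit (R := k) (r.right i) • f (r.left i) = f a := by
  have h := congrArg f (sum_smul_counit a r)
  rw [map_sum] at h
  simpa [map_smul] using h

lemma cunit_conv (f : C →ₗ[k] A) : conv cunit f = f := by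
  ext a
  rw [conv_repr _ _ a (ℛ k a)]
  calc ∑ i ∈ (ℛ k a).index, cunit ((ℛ k a).left i) * f ((ℛ k a).right i)
      = ∑ i ∈ (ℛ k a).index,
          Coalgebra.counit (R := k) ((ℛ k a).left i) • f ((ℛ k a).right i) := by
        simp [cunit, Algebra.smul_def]
    _ = f a := sum_counit_smul_map f a (ℛ k a)

lemma conv_cunit (f : C →ₗ[k] A) : conv f cunit = f := by
  ext a
  rw [conv_repr _ _ a (ℛ k a)]
  calc ∑ i ∈ (ℛ k a).index, f ((ℛ k a).left i) * cunit ((ℛ k a).right i)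
      = ∑ i ∈ (ℛ k a).index,
          Coalgebra.counit (R := k) ((ℛ k a).right i) • f ((ℛ k a).left i) := by
        simp [cunit, Algebra.smul_def, Algebra.commutes]
    _ = f a := sum_smul_counit_map f a (ℛ k a)

lemma conv_assoc (f g h : C →ₗ[k] A) : conv (conv f g) h = conv f (conv g h) := by
  ext a
  set r := ℛ k a with hr
  have key := Coalgebra.sum_map_tmul_tmul_eq (R := k) f g h a (repr := r)
    (a₁ := fun i => ℛ k (r.left i)) (a₂ := fun i => ℛ k (r.right i))
  apply_fun (LinearMap.mul' k A ∘ₗ (LinearMap.mul' k A).lTensor A) at key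
  rw [map_sum, map_sum] at key
  simp only [map_sum] at key
  rw [conv_repr _ _ a r, conv_repr _ _ a r]
  calc ∑ i ∈ r.index, conv f g (r.left i) * h (r.right i)
      = ∑ i ∈ r.index, ∑ j ∈ (ℛ k (r.left i)).index,
          f ((ℛ k (r.left i)).left j) * g ((ℛ k (r.left i)).right j) * h (r.right i) := by
        refine Finset.sum_congr rfl fun i _ => ?_
        rw [conv_repr _ _ _ (ℛ k (r.left i)), Finset.sum_mul]
    _ = ∑ i ∈ r.index, ∑ j ∈ (ℛ k (r.right i)).index,
          f (r.left i) * (g ((ℛ k (r.right i)).left j) * h ((ℛ k (r.right i)).right j)) := by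
        simpa [mul_assoc] using key.symm
    _ = ∑ i ∈ r.index, f (r.left i) * conv g h (r.right i) := by
        refine Finset.sum_congr rfl fun i _ => ?_
        rw [conv_repr _ _ _ (ℛ k (r.right i)), Finset.mul_sum]

lemma conv_inv_unique (f g g' : C →ₗ[k] A) (h1 : conv g' f = cunit) (h2 : conv f g = cunit) :
    g' = g := by
  have : conv g' (conv f g) = conv (conv g' f) g := (conv_assoc _ _ _).symm
  rwa [h2, h1, conv_cunit, cunit_conv] at this


end ConvStuff

section Antipode
variable {k H : Type} [CommRing k] [Ring H] [HopfAlgebra k H]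
open HopfAlgebra

/-- representation of `comul (a * b)` -/
def mulRepr (a b : H) (r : Coalgebra.Repr k a (H × H)) (s : Coalgebra.Repr k b (H × H)) :
    Coalgebra.Repr k (a * b) ((H × H) × (H × H)) where
  index := r.index ×ˢ s.index
  left := fun p => r.left p.1 * s.left p.2
  right := fun p => r.right p.1 * s.right p.2
  eq := by
    rw [Finset.sum_product, Bialgebra.comul_mul, ← r.eq, ← s.eq, Finset.sum_mul_sum]
    simp [Algebra.TensorProduct.tmul_mul_tmul]

/-- representation of `comul (a ⊗ₜ b)` -/
def tmulRepr (a b : H) (r : Coalgebra.Repr k a (H × H)) (s : Coalgebra.Repr k b (H × H)) :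
    Coalgebra.Repr k (a ⊗ₜ[k] b : H ⊗[k] H) ((H × H) × (H × H)) where
  index := r.index ×ˢ s.index
  left := fun p => r.left p.1 ⊗ₜ[k] s.left p.2
  right := fun p => r.right p.1 ⊗ₜ[k] s.right p.2
  eq := by
    rw [Finset.sum_product]
    simp only [TensorProduct.comul_tmul, LinearMap.coe_comp, Function.comp_apply,
      LinearEquiv.coe_coe, TensorProduct.map_tmul]
    rw [← r.eq, ← s.eq, TensorProduct.sum_tmul]
    simp only [TensorProduct.tmul_sum, map_sum, TensorProduct.tensorTensorTensorComm_tmul,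
      TensorProduct.AlgebraTensorModule.tensorTensorTensorComm_tmul]

/-- representation of `comul (1 : H)` -/
def oneRepr : Coalgebra.Repr k (1 : H) ℕ where
  index := ({0} : Finset ℕ)
  left := fun _ => 1
  right := fun _ => 1
  eq := by simp [Bialgebra.comul_one, Algebra.TensorProduct.one_def]

lemma conv_SM_M :
    conv ((antipode (R := k) (A := H)) ∘ₗ LinearMap.mul' k H) (LinearMap.mul' k H) = cunit := by
  apply TensorProduct.ext'
  intro a b
  rw [conv_repr _ _ _ (tmulRepr a b (ℛ k a) (ℛ k b))]
  have key := HopfAlgebra.sum_antipode_mul_eq_algebraMap_counit (R := k) (mulRepr a b (ℛ k a) (ℛ k b))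
  simp only [mulRepr] at key
  simpa [tmulRepr, cunit, Algebra.TensorProduct.one_def, mul_comm] using key

lemma conv_M_MSS :
    conv (LinearMap.mul' k H)
      (LinearMap.mul' k H ∘ₗ TensorProduct.map (antipode (R := k)) (antipode (R := k))
        ∘ₗ (TensorProduct.comm k H H).toLinearMap) = cunit := by
  apply TensorProduct.ext'
  intro a b
  rw [conv_repr _ _ _ (tmulRepr a b (ℛ k a) (ℛ k b))]
  simp only [tmulRepr, LinearMap.coe_comp, Function.comp_apply, LinearEquiv.coe_coe,
    TensorProduct.comm_tmul, TensorProduct.map_tmul, LinearMap.mul'_apply]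
  rw [Finset.sum_product]
  have hb := HopfAlgebra.sum_mul_antipode_eq_algebraMap_counit (R := k) (ℛ k b)
  have ha := HopfAlgebra.sum_mul_antipode_eq_algebraMap_counit (R := k) (ℛ k a)
  calc
    ∑ i ∈ (ℛ k a).index, ∑ j ∈ (ℛ k b).index,
        (ℛ k a).left i * (ℛ k b).left j *
          (antipode (R := k) ((ℛ k b).right j) * antipode (R := k) ((ℛ k a).right i))
      = ∑ i ∈ (ℛ k a).index, (ℛ k a).left i *
          ((∑ j ∈ (ℛ k b).index, (ℛ k b).left j * antipode (R := k) ((ℛ k b).right j)) *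
            antipode (R := k) ((ℛ k a).right i)) := by
        simp only [Finset.mul_sum, Finset.sum_mul, mul_assoc]
    _ = ∑ i ∈ (ℛ k a).index, Coalgebra.counit (R := k) b •
          ((ℛ k a).left i * antipode (R := k) ((ℛ k a).right i)) := by
        rw [hb]
        refine Finset.sum_congr rfl fun i _ => ?_
        rw [Algebra.smul_def, ← mul_assoc, ← Algebra.commutes, mul_assoc]
    _ = cunit (a ⊗ₜ[k] b) := by
        rw [← Finset.smul_sum, ha]
        simp [cunit, Algebra.smul_def, ← map_mul]

lemma antipode_mul' :
    (antipode (R := k) (A := H)) ∘ₗ LinearMap.mul' k H =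
      LinearMap.mul' k H ∘ₗ TensorProduct.map (antipode (R := k)) (antipode (R := k))
        ∘ₗ (TensorProduct.comm k H H).toLinearMap :=
  conv_inv_unique _ _ _ conv_SM_M conv_M_MSS

lemma antipode_mul (a b : H) :
    antipode (R := k) (a * b) = antipode (R := k) b * antipode (R := k) a := by
  have := congrArg (fun φ => φ (a ⊗ₜ[k] b)) (antipode_mul' (k := k) (H := H))
  simpa using this

lemma antipode_one : antipode (R := k) (1 : H) = 1 := by
  have := HopfAlgebra.sum_antipode_mul_eq_algebraMap_counit (R := k) (oneRepr (H := H))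
  simpa [oneRepr] using this

lemma counit_antipode (a : H) :
    Coalgebra.counit (R := k) (antipode (R := k) a) = Coalgebra.counit (R := k) a := by
  have hc : (cunit : H →ₗ[k] k) = Coalgebra.counit := by ext x; simp [cunit]
  have h1 : conv ((Coalgebra.counit : H →ₗ[k] k) ∘ₗ antipode (R := k))
      (Coalgebra.counit : H →ₗ[k] k) = cunit := by
    ext x
    rw [conv_repr _ _ x (ℛ k x)]
    calc ∑ i ∈ (ℛ k x).index,
          (Coalgebra.counit ∘ₗ antipode (R := k)) ((ℛ k x).left i) *
            Coalgebra.counit (R := k) ((ℛ k x).right i)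
        = Coalgebra.counit (R := k)
            (∑ i ∈ (ℛ k x).index, antipode (R := k) ((ℛ k x).left i) * (ℛ k x).right i) := by
          rw [map_sum]
          exact Finset.sum_congr rfl fun i _ => (Bialgebra.counit_mul _ _).symm
      _ = cunit x := by rw [HopfAlgebra.sum_antipode_mul_eq_algebraMap_counit]; simp [cunit]
  have h2 : ((Coalgebra.counit : H →ₗ[k] k) ∘ₗ antipode (R := k)) = cunit := by
    rw [← conv_cunit ((Coalgebra.counit : H →ₗ[k] k) ∘ₗ antipode (R := k)), hc, h1]
    exact hc
  have := congrArg (fun φ => φ a) h2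
  simpa [cunit] using this

end Antipode
section Comul
variable {k H : Type} [CommRing k] [Ring H] [HopfAlgebra k H]
open HopfAlgebra

lemma coassoc_expand (b : H) (v : Coalgebra.Repr k b (H × H)) (t : ∀ j, Coalgebra.Repr k (v.left j) (H × H)) :
    ∑ j ∈ v.index, v.left j ⊗ₜ[k] Coalgebra.comul (R := k) (v.right j)
      = ∑ j ∈ v.index, ∑ l ∈ (t j).index,
          (t j).left l ⊗ₜ[k] ((t j).right l ⊗ₜ[k] v.right j) := by
  have h := Coalgebra.coassoc_apply (R := k) b
  rw [← v.eq] at h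
  simp only [map_sum, LinearMap.rTensor_tmul, LinearMap.lTensor_tmul] at h
  rw [← h]
  refine Finset.sum_congr rfl fun j _ => ?_
  rw [← (t j).eq, TensorProduct.sum_tmul, map_sum]
  simp

lemma regroup4 (a : H) (r : Coalgebra.Repr k a (H × H)) (u : ∀ i, Coalgebra.Repr k (r.left i) (H × H))
    (v : ∀ i, Coalgebra.Repr k (r.right i) (H × H)) (t : ∀ i j, Coalgebra.Repr k ((v i).left j) (H × H)) :
    ∑ i ∈ r.index, ∑ j ∈ (u i).index, ∑ l ∈ (v i).index,
        (u i).left j ⊗ₜ[k] ((u i).right j ⊗ₜ[k] ((v i).left l ⊗ₜ[k] (v i).right l))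
      = ∑ i ∈ r.index, ∑ j ∈ (v i).index, ∑ l ∈ (t i j).index,
          r.left i ⊗ₜ[k] ((t i j).left l ⊗ₜ[k] ((t i j).right l ⊗ₜ[k] (v i).right j)) := by
  have h := Coalgebra.sum_tmul_tmul_eq r u v
  apply_fun LinearMap.lTensor H (LinearMap.lTensor H (Coalgebra.comul (R := k))) at h
  simp only [map_sum, LinearMap.lTensor_tmul] at h
  calc
    ∑ i ∈ r.index, ∑ j ∈ (u i).index, ∑ l ∈ (v i).index,
        (u i).left j ⊗ₜ[k] ((u i).right j ⊗ₜ[k] ((v i).left l ⊗ₜ[k] (v i).right l))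
      = ∑ i ∈ r.index, ∑ j ∈ (u i).index,
          (u i).left j ⊗ₜ[k] ((u i).right j ⊗ₜ[k] Coalgebra.comul (R := k) (r.right i)) := by
        refine Finset.sum_congr rfl fun i _ => Finset.sum_congr rfl fun j _ => ?_
        rw [← (v i).eq]
        simp only [TensorProduct.tmul_sum]
    _ = ∑ i ∈ r.index, ∑ j ∈ (v i).index,
          r.left i ⊗ₜ[k] ((v i).left j ⊗ₜ[k] Coalgebra.comul (R := k) ((v i).right j)) := h
    _ = ∑ i ∈ r.index, ∑ j ∈ (v i).index, ∑ l ∈ (t i j).index,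
          r.left i ⊗ₜ[k] ((t i j).left l ⊗ₜ[k] ((t i j).right l ⊗ₜ[k] (v i).right j)) := by
        refine Finset.sum_congr rfl fun i _ => ?_
        rw [← TensorProduct.tmul_sum, coassoc_expand (r.right i) (v i) (t i)]
        simp only [TensorProduct.tmul_sum]

lemma conv_C_CS :
    conv (Coalgebra.comul (R := k) (A := H)) (Coalgebra.comul ∘ₗ antipode (R := k)) = cunit := by
  ext a
  rw [conv_repr _ _ a (ℛ k a)]
  calc
    ∑ i ∈ (ℛ k a).index, Coalgebra.comul (R := k) ((ℛ k a).left i) *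
        (Coalgebra.comul ∘ₗ antipode (R := k)) ((ℛ k a).right i)
      = Coalgebra.comul (R := k) (∑ i ∈ (ℛ k a).index,
          (ℛ k a).left i * antipode (R := k) ((ℛ k a).right i)) := by
        rw [map_sum]
        exact Finset.sum_congr rfl fun i _ => by simp [← Bialgebra.comul_mul]
    _ = cunit a := by
        rw [HopfAlgebra.sum_mul_antipode_eq_algebraMap_counit]
        simp [cunit]
end Comul
section Comul2
variable {k H : Type} [CommRing k] [Ring H] [HopfAlgebra k H]
open HopfAlgebra

lemma conv_SSC_C :
    conv ((TensorProduct.comm k H H).toLinearMap ∘ₗ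
        TensorProduct.map (antipode (R := k)) (antipode (R := k)) ∘ₗ Coalgebra.comul)
      (Coalgebra.comul (R := k) (A := H)) = cunit := by
  ext a
  set r := ℛ k a with hr
  set u : ∀ i, Coalgebra.Repr k (r.left i) (H × H) := fun i => ℛ k (r.left i) with hu
  set v : ∀ i, Coalgebra.Repr k (r.right i) (H × H) := fun i => ℛ k (r.right i) with hv
  set t : ∀ i j, Coalgebra.Repr k ((v i).left j) (H × H) := fun i j => ℛ k ((v i).left j) with ht
  have hΦt : ∀ x y z w : H,
      (TensorProduct.map (LinearMap.mul' k H ∘ₗ TensorProduct.map (antipode (R := k)) .id)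
          (LinearMap.mul' k H ∘ₗ TensorProduct.map (antipode (R := k)) .id)
        ∘ₗ (TensorProduct.tensorTensorTensorComm k H H H H).toLinearMap
        ∘ₗ TensorProduct.map (TensorProduct.comm k H H).toLinearMap .id
        ∘ₗ (TensorProduct.assoc k H H (H ⊗[k] H)).symm.toLinearMap)
          (x ⊗ₜ[k] (y ⊗ₜ[k] (z ⊗ₜ[k] w)))
      = (antipode (R := k) y * z) ⊗ₜ[k] (antipode (R := k) x * w) := by
    intro x y z w
    simp
  have h4 := congrArg
    (TensorProduct.map (LinearMap.mul' k H ∘ₗ TensorProduct.map (antipode (R := k)) .id)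
        (LinearMap.mul' k H ∘ₗ TensorProduct.map (antipode (R := k)) .id)
      ∘ₗ (TensorProduct.tensorTensorTensorComm k H H H H).toLinearMap
      ∘ₗ TensorProduct.map (TensorProduct.comm k H H).toLinearMap .id
      ∘ₗ (TensorProduct.assoc k H H (H ⊗[k] H)).symm.toLinearMap)
    (regroup4 a r u v t)
  simp only [map_sum, hΦt] at h4
  calc
    conv ((TensorProduct.comm k H H).toLinearMap ∘ₗ
        TensorProduct.map (antipode (R := k)) (antipode (R := k)) ∘ₗ Coalgebra.comul)
      (Coalgebra.comul (R := k) (A := H)) a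
      = ∑ i ∈ r.index, ∑ j ∈ (u i).index, ∑ l ∈ (v i).index,
          (antipode (R := k) ((u i).right j) * (v i).left l) ⊗ₜ[k]
            (antipode (R := k) ((u i).left j) * (v i).right l) := by
        rw [conv_repr _ _ a r]
        refine Finset.sum_congr rfl fun i _ => ?_
        simp only [LinearMap.coe_comp, Function.comp_apply, LinearEquiv.coe_coe]
        rw [← (u i).eq, ← (v i).eq]
        simp only [map_sum, TensorProduct.map_tmul, TensorProduct.comm_tmul]
        rw [Finset.sum_mul_sum]
        simp only [Algebra.TensorProduct.tmul_mul_tmul]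
    _ = ∑ i ∈ r.index, ∑ j ∈ (v i).index, ∑ l ∈ (t i j).index,
          (antipode (R := k) ((t i j).left l) * (t i j).right l) ⊗ₜ[k]
            (antipode (R := k) (r.left i) * (v i).right j) := h4
    _ = ∑ i ∈ r.index, ∑ j ∈ (v i).index,
          (1 : H) ⊗ₜ[k] (antipode (R := k) (r.left i) *
            (Coalgebra.counit (R := k) ((v i).left j) • (v i).right j)) := by
        refine Finset.sum_congr rfl fun i _ => Finset.sum_congr rfl fun j _ => ?_
        rw [← TensorProduct.sum_tmul, HopfAlgebra.sum_antipode_mul_eq_algebraMap_counit (t i j),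
          Algebra.algebraMap_eq_smul_one, mul_smul_comm]
        exact TensorProduct.smul_tmul _ _ _
    _ = ∑ i ∈ r.index, (1 : H) ⊗ₜ[k] (antipode (R := k) (r.left i) * r.right i) := by
        refine Finset.sum_congr rfl fun i _ => ?_
        rw [← TensorProduct.tmul_sum, ← Finset.mul_sum, sum_counit_smul _ (v i)]
    _ = cunit a := by
        rw [← TensorProduct.tmul_sum, HopfAlgebra.sum_antipode_mul_eq_algebraMap_counit r]
        simp only [cunit, LinearMap.coe_comp, Function.comp_apply, Algebra.linearMap_apply,
          Algebra.TensorProduct.algebraMap_apply']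

lemma comul_antipode' :
    Coalgebra.comul ∘ₗ antipode (R := k) (A := H) =
      (TensorProduct.comm k H H).toLinearMap ∘ₗ
        TensorProduct.map (antipode (R := k)) (antipode (R := k)) ∘ₗ Coalgebra.comul :=
  (conv_inv_unique _ _ _ conv_SSC_C conv_C_CS).symm

lemma comul_antipode (a : H) :
    Coalgebra.comul (R := k) (antipode (R := k) a) =
      (TensorProduct.comm k H H) (TensorProduct.map (antipode (R := k)) (antipode (R := k))
        (Coalgebra.comul a)) := by
  have := congrArg (fun φ => φ a) (comul_antipode' (k := k) (H := H))
  simpa using this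

end Comul2
section SinvPart
variable {k H : Type} [CommRing k] [Ring H] [HopfAlgebra k H]
open HopfAlgebra

variable (Sinv : H →ₗ[k] H)
  (hS1 : Sinv ∘ₗ antipode (R := k) = LinearMap.id)
  (hS2 : antipode (R := k) ∘ₗ Sinv = LinearMap.id)

lemma comm_mapSS_comm' (z : H ⊗[k] H) :
    TensorProduct.comm k H H (TensorProduct.map (antipode (R := k)) (antipode (R := k))
      (TensorProduct.comm k H H z)) =
    TensorProduct.map (antipode (R := k)) (antipode (R := k)) z := by
  induction z with
  | zero => simp
  | tmul x y => simp
  | add x y hx hy => simp [map_add, hx, hy]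

section
set_option linter.unusedSectionVars false
include hS1 hS2

lemma Sinv_antipode (x : H) : Sinv (antipode (R := k) x) = x := LinearMap.congr_fun hS1 x
lemma antipode_Sinv (x : H) : antipode (R := k) (Sinv x) = x := LinearMap.congr_fun hS2 x

lemma antipode_injective : Function.Injective (antipode (R := k) (A := H)) :=
  Function.LeftInverse.injective (g := Sinv) (Sinv_antipode Sinv hS1 hS2)

lemma Sinv_mul (a b : H) : Sinv (a * b) = Sinv b * Sinv a := by
  apply antipode_injective Sinv hS1 hS2
  rw [antipode_Sinv Sinv hS1 hS2, _root_.antipode_mul, antipode_Sinv Sinv hS1 hS2,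
    antipode_Sinv Sinv hS1 hS2]

lemma Sinv_one : Sinv (1 : H) = 1 := by
  have := Sinv_antipode Sinv hS1 hS2 (1 : H)
  rwa [_root_.antipode_one] at this

lemma mapSS_mapTT (z : H ⊗[k] H) :
    TensorProduct.map (antipode (R := k)) (antipode (R := k))
      (TensorProduct.map Sinv Sinv z) = z := by
  induction z with
  | zero => simp
  | tmul x y => simp [antipode_Sinv Sinv hS1 hS2]
  | add x y hx hy => simp [map_add, hx, hy]

lemma mapTT_mapSS (z : H ⊗[k] H) :
    TensorProduct.map Sinv Sinv (TensorProduct.map (antipode (R := k))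
      (antipode (R := k)) z) = z := by
  induction z with
  | zero => simp
  | tmul x y => simp [Sinv_antipode Sinv hS1 hS2]
  | add x y hx hy => simp [map_add, hx, hy]

lemma comul_Sinv (a : H) :
    Coalgebra.comul (R := k) (Sinv a) =
      (TensorProduct.comm k H H) (TensorProduct.map Sinv Sinv (Coalgebra.comul a)) := by
  have key : TensorProduct.map (antipode (R := k)) (antipode (R := k))
        (Coalgebra.comul (R := k) (Sinv a)) =
      TensorProduct.map (antipode (R := k)) (antipode (R := k))
        ((TensorProduct.comm k H H) (TensorProduct.map Sinv Sinv (Coalgebra.comul a))) := by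
    apply (TensorProduct.comm k H H).injective
    rw [comm_mapSS_comm']
    have h := comul_antipode (k := k) (Sinv a)
    rw [antipode_Sinv Sinv hS1 hS2] at h
    rw [← h, mapSS_mapTT Sinv hS1 hS2]
  have := congrArg (TensorProduct.map Sinv Sinv) key
  rwa [mapTT_mapSS Sinv hS1 hS2, mapTT_mapSS Sinv hS1 hS2] at this

lemma sum_Sinv_right_mul_left (b : H) (v : Coalgebra.Repr k b (H × H)) :
    ∑ i ∈ v.index, Sinv (v.right i) * v.left i =
      Coalgebra.counit (R := k) b • (1 : H) := by
  apply antipode_injective Sinv hS1 hS2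
  rw [map_sum, map_smul, _root_.antipode_one]
  calc ∑ i ∈ v.index, antipode (R := k) (Sinv (v.right i) * v.left i)
      = ∑ i ∈ v.index, antipode (R := k) (v.left i) * v.right i := by
        refine Finset.sum_congr rfl fun i _ => ?_
        rw [_root_.antipode_mul, antipode_Sinv Sinv hS1 hS2]
    _ = Coalgebra.counit (R := k) b • (1 : H) := by
        rw [HopfAlgebra.sum_antipode_mul_eq_algebraMap_counit, Algebra.algebraMap_eq_smul_one]

lemma sum_right_mul_Sinv_left (b : H) (v : Coalgebra.Repr k b (H × H)) :
    ∑ i ∈ v.index, v.right i * Sinv (v.left i) =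
      Coalgebra.counit (R := k) b • (1 : H) := by
  apply antipode_injective Sinv hS1 hS2
  rw [map_sum, map_smul, _root_.antipode_one]
  calc ∑ i ∈ v.index, antipode (R := k) (v.right i * Sinv (v.left i))
      = ∑ i ∈ v.index, v.left i * antipode (R := k) (v.right i) := by
        refine Finset.sum_congr rfl fun i _ => ?_
        rw [_root_.antipode_mul, antipode_Sinv Sinv hS1 hS2]
    _ = Coalgebra.counit (R := k) b • (1 : H) := by
        rw [HopfAlgebra.sum_mul_antipode_eq_algebraMap_counit, Algebra.algebraMap_eq_smul_one]

end
end SinvPart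

section DualSep
variable {k : Type} [Field k]

lemma dual_ext {V : Type} [AddCommGroup V] [Module k V] {x y : V}
    (h : ∀ f : Module.Dual k V, f x = f y) : x = y := by
  rw [← sub_eq_zero]
  refine (Module.forall_dual_apply_eq_zero_iff k (x - y)).mp fun f => ?_
  rw [map_sub, h f, sub_self]

lemma tensor_dual_ext {V : Type} [AddCommGroup V] [Module k V] [Module.Finite k V]
    {x y : V ⊗[k] V}
    (h : ∀ f g : Module.Dual k V,
      LinearMap.mul' k k (TensorProduct.map f g x) = LinearMap.mul' k k (TensorProduct.map f g y)) :
    x = y := by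
  have e : ∀ (f g : Module.Dual k V) (z : V ⊗[k] V),
      (TensorProduct.dualDistribEquiv k V V) (f ⊗ₜ[k] g) z
        = LinearMap.mul' k k (TensorProduct.map f g z) := by
    intro f g z
    induction z with
    | zero => simp
    | tmul a b => simp [TensorProduct.dualDistribEquiv]
    | add a b ha hb => simp only [map_add, ha, hb]
  apply dual_ext (k := k)
  intro φ
  obtain ⟨ξ, rfl⟩ := (TensorProduct.dualDistribEquiv k V V).surjective φ
  induction ξ with
  | zero =>
      rw [(TensorProduct.dualDistribEquiv k V V).map_zero]
      rfl
  | tmul f g => rw [e, e, h]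
  | add ξ η hξ hη =>
      rw [(TensorProduct.dualDistribEquiv k V V).map_add]
      simp only [LinearMap.add_apply, hξ, hη]

end DualSep

variable (k : Type) [Field k]

/-- Convolution product of two linear functionals on a coalgebra. -/
def fconv (C : Type) [AddCommGroup C] [Module k C] [Coalgebra k C]
    (f g : C →ₗ[k] k) : C →ₗ[k] k :=
  LinearMap.mul' k k ∘ₗ TensorProduct.map f g ∘ₗ Coalgebra.comul

/-- The comultiplication of the dual coalgebra of a finite-dimensional algebra. -/
def dcomul (K : Type) [Ring K] [Algebra k K] [Module.Finite k K] :
    Module.Dual k K →ₗ[k] Module.Dual k K ⊗[k] Module.Dual k K :=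
  (TensorProduct.dualDistribEquiv k K K).symm.toLinearMap ∘ₗ (LinearMap.mul' k K).dualMap

variable (K H : Type) [Ring K] [Ring H] [HopfAlgebra k K] [HopfAlgebra k H]
  [Module.Finite k K] [Module.Finite k H]

/-- The map `σ_r : H → K` induced by a pairing `σ : K* ⊗ H → k` (curried as `σ : K* → H*`),
via the canonical identification `K ≅ K**`. -/
def sigmaR (σ : Module.Dual k K →ₗ[k] Module.Dual k H) : H →ₗ[k] K :=
  (Module.evalEquiv k K).symm.toLinearMap ∘ₗ σ.flip

/-- The opposite multiplication of `K`, i.e. the multiplication of `K^{op}`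
(`k ⊗ k' ↦ k' * k`), on the underlying space `K`. -/
def opMul : K ⊗[k] K →ₗ[k] K :=
  LinearMap.mul' k K ∘ₗ (TensorProduct.comm k K K).toLinearMap

/-- The multiplication of the tensor product algebra `K^{op} ⊗ H`
(on the underlying space `K ⊗ H`). -/
def mulB : (K ⊗[k] H) ⊗[k] (K ⊗[k] H) →ₗ[k] K ⊗[k] H :=
  TensorProduct.map (opMul k K) (LinearMap.mul' k H)
    ∘ₗ (TensorProduct.tensorTensorTensorComm k K H K H).toLinearMap

/-- The unit of `K^{op} ⊗ H`. -/
def oneB : K ⊗[k] H := (1 : K) ⊗ₜ[k] (1 : H)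

/-- The comultiplication of the tensor product coalgebra `K^{op} ⊗ H`
(`K^{op}` has the same comultiplication as `K`). -/
def comulB : K ⊗[k] H →ₗ[k] (K ⊗[k] H) ⊗[k] (K ⊗[k] H) :=
  (TensorProduct.tensorTensorTensorComm k K K H H).toLinearMap
    ∘ₗ TensorProduct.map Coalgebra.comul Coalgebra.comul

/-- The counit of the coalgebra `K^{op} ⊗ H`. -/
def epsB : K ⊗[k] H →ₗ[k] k :=
  LinearMap.mul' k k ∘ₗ
    TensorProduct.map (Coalgebra.counit (R := k) (A := K)) (Coalgebra.counit (R := k) (A := H))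

/-- The coaction `ρ : H → (K^{op} ⊗ H) ⊗ H`, `h ↦ Σ (σ_r(S⁻¹(h₍₃₎)) ⊗ h₍₁₎) ⊗ h₍₂₎`. -/
def rhoH (σ : Module.Dual k K →ₗ[k] Module.Dual k H) (Sinv : H →ₗ[k] H) :
    H →ₗ[k] (K ⊗[k] H) ⊗[k] H :=
  (TensorProduct.assoc k K H H).symm.toLinearMap
    ∘ₗ TensorProduct.map (sigmaR k K H σ ∘ₗ Sinv) .id
    ∘ₗ (TensorProduct.comm k (H ⊗[k] H) H).toLinearMap
    ∘ₗ TensorProduct.map Coalgebra.comul .id ∘ₗ Coalgebra.comul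

/-- The right `K^{op} ⊗ H`-action on `K^{op}`:
`l ⊗ (κ ⊗ h) ↦ κ l σ_r(h)`, where the product is written in `K`
(i.e. the element `κ * l * σ_r(h)` of `K`). -/
def actK (σ : Module.Dual k K →ₗ[k] Module.Dual k H) :
    K ⊗[k] (K ⊗[k] H) →ₗ[k] K :=
  LinearMap.mul' k K
    ∘ₗ TensorProduct.map (LinearMap.mul' k K ∘ₗ (TensorProduct.comm k K K).toLinearMap) .id
    ∘ₗ (TensorProduct.assoc k K K K).symm.toLinearMap
    ∘ₗ TensorProduct.map .id (TensorProduct.map .id (sigmaR k K H σ))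

/-- The map `ι : H → K^{op} ⊗ H`, `h ↦ Σ σ_r(S⁻¹(h₍₂₎)) ⊗ h₍₁₎`. -/
def iotaH (σ : Module.Dual k K →ₗ[k] Module.Dual k H) (Sinv : H →ₗ[k] H) :
    H →ₗ[k] K ⊗[k] H :=
  TensorProduct.map (sigmaR k K H σ ∘ₗ Sinv) .id
    ∘ₗ (TensorProduct.comm k H H).toLinearMap ∘ₗ Coalgebra.comul

/-- The map `π : K^{op} ⊗ H → K^{op}`, `κ ⊗ h ↦ κ σ_r(h)` (product written in `K`). -/
def piB (σ : Module.Dual k K →ₗ[k] Module.Dual k H) : K ⊗[k] H →ₗ[k] K :=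
  LinearMap.mul' k K ∘ₗ TensorProduct.map .id (sigmaR k K H σ)


lemma apply_sigmaR (σ : Module.Dual k K →ₗ[k] Module.Dual k H) (f : Module.Dual k K) (h : H) :
    f (sigmaR k K H σ h) = σ f h := by
  simp [sigmaR]

lemma sigmaR_one (σ : Module.Dual k K →ₗ[k] Module.Dual k H)
    (pair_one_right : ∀ f : Module.Dual k K, σ f 1 = f 1) :
    sigmaR k K H σ 1 = 1 := by
  refine dual_ext (k := k) fun f => ?_
  rw [apply_sigmaR, pair_one_right]

lemma sigmaR_mul (σ : Module.Dual k K →ₗ[k] Module.Dual k H)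
    (pair_mul_right : ∀ (f : Module.Dual k K) (h h' : H),
      σ f (h * h') =
        (LinearMap.mul' k k ∘ₗ
          TensorProduct.map (LinearMap.applyₗ h ∘ₗ σ) (LinearMap.applyₗ h' ∘ₗ σ))
          (dcomul k K f)) (h h' : H) :
    sigmaR k K H σ (h * h') = sigmaR k K H σ h * sigmaR k K H σ h' := by
  refine dual_ext (k := k) fun f => ?_
  rw [apply_sigmaR, pair_mul_right]
  have aux : ∀ ξ : Module.Dual k K ⊗[k] Module.Dual k K,
      (LinearMap.mul' k k ∘ₗ
          TensorProduct.map (LinearMap.applyₗ h ∘ₗ σ) (LinearMap.applyₗ h' ∘ₗ σ)) ξ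
        = (TensorProduct.dualDistribEquiv k K K) ξ
            (sigmaR k K H σ h ⊗ₜ[k] sigmaR k K H σ h') := by
    intro ξ
    induction ξ with
    | zero =>
        rw [(TensorProduct.dualDistribEquiv k K K).map_zero, map_zero]
        rfl
    | tmul f₁ f₂ =>
        simp [TensorProduct.dualDistribEquiv, apply_sigmaR]
    | add ξ η hξ hη =>
        rw [map_add, (TensorProduct.dualDistribEquiv k K K).map_add]
        simp only [LinearMap.add_apply, hξ, hη]
  rw [aux, dcomul]
  simp only [LinearMap.coe_comp, Function.comp_apply, LinearEquiv.coe_coe,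
    LinearEquiv.apply_symm_apply, LinearMap.dualMap_apply, LinearMap.mul'_apply]

lemma counit_sigmaR (σ : Module.Dual k K →ₗ[k] Module.Dual k H)
    (pair_one_left : σ Coalgebra.counit = Coalgebra.counit) (h : H) :
    Coalgebra.counit (R := k) (sigmaR k K H σ h) = Coalgebra.counit (R := k) h := by
  rw [apply_sigmaR, pair_one_left]

lemma comul_sigmaR (σ : Module.Dual k K →ₗ[k] Module.Dual k H)
    (pair_mul_left : ∀ f g : Module.Dual k K, σ (fconv k K f g) = fconv k H (σ f) (σ g))
    (h : H) :
    Coalgebra.comul (R := k) (sigmaR k K H σ h) =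
      TensorProduct.map (sigmaR k K H σ) (sigmaR k K H σ) (Coalgebra.comul h) := by
  refine tensor_dual_ext (k := k) fun f g => ?_
  have h1 : LinearMap.mul' k k
        (TensorProduct.map f g (Coalgebra.comul (R := k) (sigmaR k K H σ h)))
      = fconv k K f g (sigmaR k K H σ h) := rfl
  rw [h1, apply_sigmaR, pair_mul_left]
  simp only [fconv, LinearMap.coe_comp, Function.comp_apply]
  rw [← (ℛ k h).eq]
  simp only [map_sum, TensorProduct.map_tmul, LinearMap.mul'_apply]
  refine Finset.sum_congr rfl fun i _ => ?_
  rw [apply_sigmaR, apply_sigmaR]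



lemma iotaH_repr (σ : Module.Dual k K →ₗ[k] Module.Dual k H) (Sinv : H →ₗ[k] H)
    (h : H) (r : Coalgebra.Repr k h (H × H)) :
    iotaH k K H σ Sinv h =
      ∑ i ∈ r.index, sigmaR k K H σ (Sinv (r.right i)) ⊗ₜ[k] r.left i := by
  simp only [iotaH, LinearMap.coe_comp, Function.comp_apply, LinearEquiv.coe_coe]
  rw [← r.eq]
  simp only [map_sum, TensorProduct.comm_tmul, TensorProduct.map_tmul,
    LinearMap.coe_comp, Function.comp_apply, LinearMap.id_coe, id_eq]

lemma comulB_tmul (p : K) (q : H) :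
    comulB k K H (p ⊗ₜ[k] q) =
      TensorProduct.tensorTensorTensorComm k K K H H
        (Coalgebra.comul (R := k) p ⊗ₜ[k] Coalgebra.comul (R := k) q) := by
  simp [comulB]

lemma comul_gamma (σ : Module.Dual k K →ₗ[k] Module.Dual k H)
    (pair_mul_left : ∀ f g : Module.Dual k K, σ (fconv k K f g) = fconv k H (σ f) (σ g))
    (Sinv : H →ₗ[k] H)
    (hS1 : Sinv ∘ₗ HopfAlgebra.antipode (R := k) = LinearMap.id)
    (hS2 : HopfAlgebra.antipode (R := k) ∘ₗ Sinv = LinearMap.id)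
    (c : H) (v : Coalgebra.Repr k c (H × H)) :
    Coalgebra.comul (R := k) (sigmaR k K H σ (Sinv c)) =
      ∑ j ∈ v.index,
        sigmaR k K H σ (Sinv (v.right j)) ⊗ₜ[k] sigmaR k K H σ (Sinv (v.left j)) := by
  rw [comul_sigmaR k K H σ pair_mul_left, comul_Sinv Sinv hS1 hS2, ← v.eq]
  simp only [map_sum, TensorProduct.map_tmul, TensorProduct.comm_tmul]

lemma forward_key (σ : Module.Dual k K →ₗ[k] Module.Dual k H)
    (pair_mul_left : ∀ f g : Module.Dual k K, σ (fconv k K f g) = fconv k H (σ f) (σ g))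
    (pair_mul_right : ∀ (f : Module.Dual k K) (h h' : H),
      σ f (h * h') =
        (LinearMap.mul' k k ∘ₗ
          TensorProduct.map (LinearMap.applyₗ h ∘ₗ σ) (LinearMap.applyₗ h' ∘ₗ σ))
          (dcomul k K f))
    (pair_one_right : ∀ f : Module.Dual k K, σ f 1 = f 1)
    (Sinv : H →ₗ[k] H)
    (hS1 : Sinv ∘ₗ HopfAlgebra.antipode (R := k) = LinearMap.id)
    (hS2 : HopfAlgebra.antipode (R := k) ∘ₗ Sinv = LinearMap.id)
    (h : H) :
    (TensorProduct.map LinearMap.id (piB k K H σ)) (comulB k K H (iotaH k K H σ Sinv h))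
      = iotaH k K H σ Sinv h ⊗ₜ[k] (1 : K) := by
  set r := ℛ k h with hr
  set u : ∀ i, Coalgebra.Repr k (r.left i) (H × H) := fun i => ℛ k (r.left i) with hu
  set v : ∀ i, Coalgebra.Repr k (r.right i) (H × H) := fun i => ℛ k (r.right i) with hv
  set t : ∀ i j, Coalgebra.Repr k ((v i).left j) (H × H) := fun i j => ℛ k ((v i).left j) with ht
  set Φ : H ⊗[k] (H ⊗[k] (H ⊗[k] H)) →ₗ[k] (K ⊗[k] H) ⊗[k] K :=
    TensorProduct.map
        ((TensorProduct.comm k H K).toLinearMap ∘ₗ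
          TensorProduct.map LinearMap.id (sigmaR k K H σ ∘ₗ Sinv))
        (LinearMap.mul' k K ∘ₗ (TensorProduct.comm k K K).toLinearMap ∘ₗ
          TensorProduct.map (sigmaR k K H σ) (sigmaR k K H σ ∘ₗ Sinv))
      ∘ₗ (TensorProduct.tensorTensorTensorComm k H H H H).toLinearMap
      ∘ₗ TensorProduct.map LinearMap.id (TensorProduct.comm k H H).toLinearMap
      ∘ₗ (TensorProduct.assoc k H H (H ⊗[k] H)).symm.toLinearMap with hΦ
  have hΦt : ∀ x y z w : H, Φ (x ⊗ₜ[k] (y ⊗ₜ[k] (z ⊗ₜ[k] w)))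
      = (sigmaR k K H σ (Sinv w) ⊗ₜ[k] x) ⊗ₜ[k]
          (sigmaR k K H σ (Sinv z) * sigmaR k K H σ y) := by
    intro x y z w
    simp [hΦ]
  have h4 := congrArg Φ (regroup4 h r u v t)
  simp only [map_sum, hΦt] at h4
  calc
    (TensorProduct.map LinearMap.id (piB k K H σ)) (comulB k K H (iotaH k K H σ Sinv h))
      = ∑ i ∈ r.index, ∑ j ∈ (u i).index, ∑ l ∈ (v i).index,
          (sigmaR k K H σ (Sinv ((v i).right l)) ⊗ₜ[k] (u i).left j) ⊗ₜ[k]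
            (sigmaR k K H σ (Sinv ((v i).left l)) * sigmaR k K H σ ((u i).right j)) := by
        rw [iotaH_repr k K H σ Sinv h r, map_sum, map_sum]
        refine Finset.sum_congr rfl fun i _ => ?_
        rw [comulB_tmul, comul_gamma k K H σ pair_mul_left Sinv hS1 hS2 _ (v i), ← (u i).eq]
        simp only [TensorProduct.sum_tmul, TensorProduct.tmul_sum, map_sum,
          TensorProduct.tensorTensorTensorComm_tmul, TensorProduct.map_tmul,
          LinearMap.id_coe, id_eq, piB, LinearMap.coe_comp, Function.comp_apply,
          LinearMap.mul'_apply]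
    _ = ∑ i ∈ r.index, ∑ j ∈ (v i).index, ∑ l ∈ (t i j).index,
          (sigmaR k K H σ (Sinv ((v i).right j)) ⊗ₜ[k] r.left i) ⊗ₜ[k]
            (sigmaR k K H σ (Sinv ((t i j).right l)) * sigmaR k K H σ ((t i j).left l)) := h4
    _ = ∑ i ∈ r.index, ∑ j ∈ (v i).index,
          Coalgebra.counit (R := k) ((v i).left j) •
            ((sigmaR k K H σ (Sinv ((v i).right j)) ⊗ₜ[k] r.left i) ⊗ₜ[k] (1 : K)) := by
        refine Finset.sum_congr rfl fun i _ => Finset.sum_congr rfl fun j _ => ?_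
        calc
          ∑ l ∈ (t i j).index,
              (sigmaR k K H σ (Sinv ((v i).right j)) ⊗ₜ[k] r.left i) ⊗ₜ[k]
                (sigmaR k K H σ (Sinv ((t i j).right l)) * sigmaR k K H σ ((t i j).left l))
            = (sigmaR k K H σ (Sinv ((v i).right j)) ⊗ₜ[k] r.left i) ⊗ₜ[k]
                (sigmaR k K H σ (∑ l ∈ (t i j).index,
                  Sinv ((t i j).right l) * (t i j).left l)) := by
              rw [map_sum, TensorProduct.tmul_sum]
              refine Finset.sum_congr rfl fun l _ => ?_
              rw [sigmaR_mul k K H σ pair_mul_right]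
          _ = Coalgebra.counit (R := k) ((v i).left j) •
                ((sigmaR k K H σ (Sinv ((v i).right j)) ⊗ₜ[k] r.left i) ⊗ₜ[k] (1 : K)) := by
              rw [sum_Sinv_right_mul_left Sinv hS1 hS2 _ (t i j), map_smul,
                sigmaR_one k K H σ pair_one_right, TensorProduct.tmul_smul]
    _ = iotaH k K H σ Sinv h ⊗ₜ[k] (1 : K) := by
        rw [iotaH_repr k K H σ Sinv h r, TensorProduct.sum_tmul]
        refine Finset.sum_congr rfl fun i _ => ?_
        exact sum_counit_smul_map
          (((TensorProduct.mk k (K ⊗[k] H) K).flip 1) ∘ₗ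
            ((TensorProduct.mk k K H).flip (r.left i)) ∘ₗ (sigmaR k K H σ ∘ₗ Sinv))
          (r.right i) (v i)



/-- The retraction `G : (K ⊗ H) ⊗ K → K ⊗ H`, `(κ ⊗ h) ⊗ l ↦ ε(κ) • (ι h) ·_B (l ⊗ 1)`. -/
def Gmap (σ : Module.Dual k K →ₗ[k] Module.Dual k H) (Sinv : H →ₗ[k] H) :
    (K ⊗[k] H) ⊗[k] K →ₗ[k] K ⊗[k] H :=
  mulB k K H ∘ₗ TensorProduct.map
    ((TensorProduct.lid k (K ⊗[k] H)).toLinearMap ∘ₗ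
      TensorProduct.map (Coalgebra.counit (R := k) (A := K)) (iotaH k K H σ Sinv))
    ((TensorProduct.mk k K H).flip 1)

lemma mulB_tmul (a b : K) (p q : H) :
    mulB k K H ((a ⊗ₜ[k] p) ⊗ₜ[k] (b ⊗ₜ[k] q)) = (b * a) ⊗ₜ[k] (p * q) := by
  simp [mulB, opMul]

lemma Gmap_tmul (σ : Module.Dual k K →ₗ[k] Module.Dual k H) (Sinv : H →ₗ[k] H)
    (κ : K) (h : H) (l : K) :
    Gmap k K H σ Sinv ((κ ⊗ₜ[k] h) ⊗ₜ[k] l) =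
      Coalgebra.counit (R := k) κ •
        mulB k K H (iotaH k K H σ Sinv h ⊗ₜ[k] (l ⊗ₜ[k] (1 : H))) := by
  simp only [Gmap, LinearMap.coe_comp, Function.comp_apply, TensorProduct.map_tmul,
    LinearEquiv.coe_coe, TensorProduct.lid_tmul, TensorProduct.mk_apply,
    LinearMap.flip_apply]
  rw [← TensorProduct.smul_tmul', map_smul]

lemma mulB_one_right (z : K ⊗[k] H) :
    mulB k K H (z ⊗ₜ[k] ((1 : K) ⊗ₜ[k] (1 : H))) = z := by
  induction z with
  | zero => simp
  | tmul a p => rw [mulB_tmul]; simp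
  | add a b ha hb => rw [TensorProduct.add_tmul, map_add, ha, hb]

lemma Gmap_tmul_one_mem (σ : Module.Dual k K →ₗ[k] Module.Dual k H) (Sinv : H →ₗ[k] H)
    (y : K ⊗[k] H) :
    Gmap k K H σ Sinv (y ⊗ₜ[k] (1 : K)) ∈ LinearMap.range (iotaH k K H σ Sinv) := by
  induction y with
  | zero => rw [TensorProduct.zero_tmul, map_zero]; exact Submodule.zero_mem _
  | tmul κ h =>
      rw [Gmap_tmul, mulB_one_right]
      exact ⟨Coalgebra.counit (R := k) κ • h, by rw [map_smul]⟩
  | add a b ha hb =>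
      rw [TensorProduct.add_tmul, map_add]
      exact Submodule.add_mem _ ha hb

lemma Gmap_section (σ : Module.Dual k K →ₗ[k] Module.Dual k H)
    (pair_mul_right : ∀ (f : Module.Dual k K) (h h' : H),
      σ f (h * h') =
        (LinearMap.mul' k k ∘ₗ
          TensorProduct.map (LinearMap.applyₗ h ∘ₗ σ) (LinearMap.applyₗ h' ∘ₗ σ))
          (dcomul k K f))
    (pair_one_right : ∀ f : Module.Dual k K, σ f 1 = f 1)
    (Sinv : H →ₗ[k] H)
    (hS1 : Sinv ∘ₗ HopfAlgebra.antipode (R := k) = LinearMap.id)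
    (hS2 : HopfAlgebra.antipode (R := k) ∘ₗ Sinv = LinearMap.id)
    (x : K ⊗[k] H) :
    Gmap k K H σ Sinv
      ((TensorProduct.map LinearMap.id (piB k K H σ)) (comulB k K H x)) = x := by
  induction x with
  | zero => simp
  | add a b ha hb => rw [map_add, map_add, map_add, ha, hb]
  | tmul κ h =>
    set s := ℛ k κ with hs
    set r := ℛ k h with hr
    set u : ∀ j, Coalgebra.Repr k (r.left j) (H × H) := fun j => ℛ k (r.left j) with hu
    set v : ∀ j, Coalgebra.Repr k (r.right j) (H × H) := fun j => ℛ k (r.right j) with hv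
    have hcB : (TensorProduct.map LinearMap.id (piB k K H σ)) (comulB k K H (κ ⊗ₜ[k] h)) =
        ∑ i ∈ s.index, ∑ j ∈ r.index,
          (s.left i ⊗ₜ[k] r.left j) ⊗ₜ[k] (s.right i * sigmaR k K H σ (r.right j)) := by
      rw [comulB_tmul, ← s.eq, ← r.eq]
      simp only [TensorProduct.sum_tmul, TensorProduct.tmul_sum, map_sum,
        TensorProduct.tensorTensorTensorComm_tmul, TensorProduct.map_tmul,
        LinearMap.id_coe, id_eq, piB, LinearMap.coe_comp, Function.comp_apply,
        LinearMap.mul'_apply]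
      rw [Finset.sum_comm]
    rw [hcB]
    rw [map_sum]
    calc
      ∑ i ∈ s.index, Gmap k K H σ Sinv (∑ j ∈ r.index,
          (s.left i ⊗ₜ[k] r.left j) ⊗ₜ[k] (s.right i * sigmaR k K H σ (r.right j)))
        = ∑ i ∈ s.index, ∑ j ∈ r.index, Coalgebra.counit (R := k) (s.left i) •
            (mulB k K H ∘ₗ TensorProduct.mk k (K ⊗[k] H) (K ⊗[k] H)
                (iotaH k K H σ Sinv (r.left j)) ∘ₗ (TensorProduct.mk k K H).flip (1 : H) ∘ₗ
              LinearMap.mulRight k (sigmaR k K H σ (r.right j))) (s.right i) := by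
          refine Finset.sum_congr rfl fun i _ => ?_
          rw [map_sum]
          exact Finset.sum_congr rfl fun j _ => Gmap_tmul k K H σ Sinv _ _ _
      _ = ∑ j ∈ r.index, ∑ i ∈ s.index, Coalgebra.counit (R := k) (s.left i) •
            (mulB k K H ∘ₗ TensorProduct.mk k (K ⊗[k] H) (K ⊗[k] H)
                (iotaH k K H σ Sinv (r.left j)) ∘ₗ (TensorProduct.mk k K H).flip (1 : H) ∘ₗ
              LinearMap.mulRight k (sigmaR k K H σ (r.right j))) (s.right i) :=
          Finset.sum_comm
      _ = ∑ j ∈ r.index,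
            mulB k K H (iotaH k K H σ Sinv (r.left j) ⊗ₜ[k]
              ((κ * sigmaR k K H σ (r.right j)) ⊗ₜ[k] (1 : H))) := by
          refine Finset.sum_congr rfl fun j _ => ?_
          rw [sum_counit_smul_map _ κ s]
          simp only [LinearMap.coe_comp, Function.comp_apply, LinearMap.mulRight_apply,
            LinearMap.flip_apply, TensorProduct.mk_apply]
      _ = ∑ j ∈ r.index, ∑ m ∈ (u j).index,
            (κ * sigmaR k K H σ (r.right j) * sigmaR k K H σ (Sinv ((u j).right m))) ⊗ₜ[k]
              (u j).left m := by
          refine Finset.sum_congr rfl fun j _ => ?_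
          rw [iotaH_repr k K H σ Sinv _ (u j), TensorProduct.sum_tmul, map_sum]
          refine Finset.sum_congr rfl fun m _ => ?_
          rw [mulB_tmul, mul_one]
      _ = κ ⊗ₜ[k] h := by
          have h3 := Coalgebra.sum_tmul_tmul_eq r u v
          apply_fun ((TensorProduct.comm k H K).toLinearMap ∘ₗ
            TensorProduct.map LinearMap.id
              (LinearMap.mulLeft k κ ∘ₗ LinearMap.mul' k K ∘ₗ
                TensorProduct.map (sigmaR k K H σ) (sigmaR k K H σ ∘ₗ Sinv) ∘ₗ
                  (TensorProduct.comm k H H).toLinearMap)) at h3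
          simp only [map_sum, LinearMap.coe_comp, Function.comp_apply, LinearEquiv.coe_coe,
            TensorProduct.map_tmul, TensorProduct.comm_tmul, LinearMap.id_coe, id_eq,
            LinearMap.mul'_apply, LinearMap.mulLeft_apply] at h3
          calc
            ∑ j ∈ r.index, ∑ m ∈ (u j).index,
                (κ * sigmaR k K H σ (r.right j) * sigmaR k K H σ (Sinv ((u j).right m))) ⊗ₜ[k]
                  (u j).left m
              = ∑ j ∈ r.index, ∑ m ∈ (u j).index,
                  (κ * (sigmaR k K H σ (r.right j) * sigmaR k K H σ (Sinv ((u j).right m)))) ⊗ₜ[k]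
                    (u j).left m := by
                simp only [mul_assoc]
            _ = ∑ j ∈ r.index, ∑ m ∈ (v j).index,
                  (κ * (sigmaR k K H σ ((v j).right m) *
                    sigmaR k K H σ (Sinv ((v j).left m)))) ⊗ₜ[k] r.left j := h3
            _ = ∑ j ∈ r.index, κ ⊗ₜ[k]
                  (Coalgebra.counit (R := k) (r.right j) • r.left j) := by
                refine Finset.sum_congr rfl fun j _ => ?_
                calc
                  ∑ m ∈ (v j).index, (κ * (sigmaR k K H σ ((v j).right m) *
                      sigmaR k K H σ (Sinv ((v j).left m)))) ⊗ₜ[k] r.left j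
                    = (κ * sigmaR k K H σ (∑ m ∈ (v j).index,
                        (v j).right m * Sinv ((v j).left m))) ⊗ₜ[k] r.left j := by
                      rw [map_sum, Finset.mul_sum, TensorProduct.sum_tmul]
                      refine Finset.sum_congr rfl fun m _ => ?_
                      rw [sigmaR_mul k K H σ pair_mul_right]
                  _ = κ ⊗ₜ[k] (Coalgebra.counit (R := k) (r.right j) • r.left j) := by
                      rw [sum_right_mul_Sinv_left Sinv hS1 hS2 _ (v j),
                        LinearMap.map_smul, sigmaR_one k K H σ pair_one_right, mul_smul_comm,
                        mul_one, TensorProduct.smul_tmul]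
            _ = κ ⊗ₜ[k] h := by
                rw [← TensorProduct.tmul_sum, sum_smul_counit h r]


/-- The image of `ι : H → K^{op} ⊗ H`, `h ↦ Σ σ_r(S⁻¹(h₍₂₎)) ⊗ h₍₁₎`,
equals the space of coinvariants `{ x : Σ x₍₁₎ ⊗ π(x₍₂₎) = x ⊗ 1 }` of the right
`K^{op}`-comodule structure `(id ⊗ π) ∘ Δ` on `K^{op} ⊗ H`, where
`π(κ ⊗ h) = κ σ_r(h)`. -/
theorem iota_range_eq_coinvariants (σ : Module.Dual k K →ₗ[k] Module.Dual k H)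
    (pair_mul_left : ∀ f g : Module.Dual k K, σ (fconv k K f g) = fconv k H (σ f) (σ g))
    (pair_mul_right : ∀ (f : Module.Dual k K) (h h' : H),
      σ f (h * h') =
        (LinearMap.mul' k k ∘ₗ
          TensorProduct.map (LinearMap.applyₗ h ∘ₗ σ) (LinearMap.applyₗ h' ∘ₗ σ))
          (dcomul k K f))
    (pair_one_left : σ Coalgebra.counit = Coalgebra.counit)
    (pair_one_right : ∀ f : Module.Dual k K, σ f 1 = f 1)
    (Sinv : H →ₗ[k] H)
    (hSinv₁ : Sinv ∘ₗ HopfAlgebra.antipode (R := k) = LinearMap.id)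
    (hSinv₂ : HopfAlgebra.antipode (R := k) ∘ₗ Sinv = LinearMap.id) :
    ∀ x : K ⊗[k] H,
      x ∈ LinearMap.range (iotaH k K H σ Sinv) ↔
        (TensorProduct.map .id (piB k K H σ) ∘ₗ comulB k K H) x = x ⊗ₜ (1 : K) := by
  intro x
  constructor
  · rintro ⟨h, rfl⟩
    rw [LinearMap.comp_apply]
    exact forward_key k K H σ pair_mul_left pair_mul_right pair_one_right Sinv hSinv₁ hSinv₂ h
  · intro hx
    rw [LinearMap.comp_apply] at hx
    have h2 := Gmap_section k K H σ pair_mul_right pair_one_right Sinv hSinv₁ hSinv₂ x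
    rw [hx] at h2
    rw [← h2]
    exact Gmap_tmul_one_mem k K H σ Sinv x
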